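/- For any α ∈ (0,1] and stochastic matrix W from a finite set X to pmfs on a finite set Y, the order-α Rényi capacity equals the order-α Rényi radius: C_α(W) = inf_{Q pmf on Y} max_{x ∈ X} D_α(W(·|x)‖Q). Moreover there exists a unique pmf q_{α,W} on Y (the order-α Rényi center) achieving the infimum, i.e., C_α(W) = max_{x} D_α(W(·|x)‖q_{α,W}). -/

import Mathlib

set_option linter.unusedSectionVars false

open Real MeasureTheory Filter Topology

def IsPMF {Y : Type*} [Fintype Y] (W : Y → ℝ) : Prop :=
  (∀ y, 0 ≤ W y) ∧ ∑ y, W y = 1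

noncomputable def renyiDiv {Y : Type*} [Fintype Y] (α : ℝ) (W Q : Y → ℝ) : ℝ :=
  if α = 1 then ∑ y, W y * Real.log (W y / Q y)
  else (α - 1)⁻¹ * Real.log (∑ y, W y ^ α * Q y ^ (1 - α))

open Classical in
/-- Extended-real-valued order-`α` Rényi divergence, taking the value `⊤` when the
divergence is infinite. -/
noncomputable def renyiDivE {Y : Type*} [Fintype Y] (α : ℝ) (W Q : Y → ℝ) : ENNReal :=
  if α = 1 then
    (if ∀ y, Q y = 0 → W y = 0 then ENNReal.ofReal (renyiDiv 1 W Q) else ⊤)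
  else
    (if 0 < ∑ y, W y ^ α * Q y ^ (1 - α) then ENNReal.ofReal (renyiDiv α W Q) else ⊤)

/-- The order-`α` tilted pmf `W^α_Q`. -/
noncomputable def tilt {Y : Type*} [Fintype Y] (α : ℝ) (W Q : Y → ℝ) : Y → ℝ :=
  fun y => Real.exp ((1 - α) * renyiDiv α W Q) * W y ^ α * Q y ^ (1 - α)

/-- The order-`α` Rényi information `I_α(P;W)` (mutual information for `α = 1`). -/
noncomputable def renyiInfo {X Y : Type*} [Fintype X] [Fintype Y] (α : ℝ) (P : X → ℝ)
    (W : X → Y → ℝ) : ℝ :=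
  if α = 1 then ∑ x, P x * ∑ y, W x y * Real.log (W x y / (∑ x', P x' * W x' y))
  else (α / (α - 1)) * Real.log (∑ y, (∑ x, P x * W x y ^ α) ^ α⁻¹)

/-- The order-`α` Rényi capacity `C_α(W) = sup_P I_α(P;W)`. -/
noncomputable def renyiCap {X Y : Type*} [Fintype X] [Fintype Y] (α : ℝ) (W : X → Y → ℝ) : ℝ :=
  sSup {c | ∃ P : X → ℝ, IsPMF P ∧ c = renyiInfo α P W}

/-- The sphere packing exponent `E_sp(R,W)`. -/
noncomputable def spe {X Y : Type*} [Fintype X] [Fintype Y] (R : ℝ) (W : X → Y → ℝ) : ℝ :=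
  sSup {e | ∃ α ∈ Set.Ioo (0:ℝ) 1, e = ((1 - α) / α) * (renyiCap α W - R)}

/-- The order-`α` Rényi mean `q_{α,P}`. -/
noncomputable def renyiMean {X Y : Type*} [Fintype X] [Fintype Y] (α : ℝ) (P : X → ℝ)
    (W : X → Y → ℝ) : Y → ℝ :=
  fun y => (∑ x, P x * W x y ^ α) ^ α⁻¹ / ∑ y', (∑ x, P x * W x y' ^ α) ^ α⁻¹


namespace RCap

variable {X Y : Type*} [Fintype X] [Fintype Y]

theorem isPMF_iff_mem_stdSimplex (P : Y → ℝ) : IsPMF P ↔ P ∈ stdSimplex ℝ Y := Iff.rfl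

/-- two-point AM-GM summed: `∑ g^α h^(1-α) ≤ (∑g)^α (∑h)^(1-α)` -/
theorem sum_gm_le {α : ℝ} (hα : 0 < α) (hα1 : α < 1) (g h : Y → ℝ)
    (hg : ∀ y, 0 ≤ g y) (hh : ∀ y, 0 ≤ h y) :
    ∑ y, g y ^ α * h y ^ (1 - α) ≤ (∑ y, g y) ^ α * (∑ y, h y) ^ (1 - α) := by
  set G := ∑ y, g y with hG
  set H := ∑ y, h y with hH
  have hG0 : 0 ≤ G := Finset.sum_nonneg fun y _ => hg y
  have hH0 : 0 ≤ H := Finset.sum_nonneg fun y _ => hh y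
  rcases eq_or_lt_of_le hG0 with hGz | hGpos
  · have hgz : ∀ y, g y = 0 := by
      intro y
      have := Finset.sum_eq_zero_iff_of_nonneg (fun y _ => hg y) |>.1 hGz.symm
      exact this y (Finset.mem_univ y)
    have : ∀ y, g y ^ α * h y ^ (1 - α) = 0 := by
      intro y; rw [hgz y, Real.zero_rpow hα.ne', zero_mul]
    rw [Finset.sum_congr rfl fun y _ => this y, Finset.sum_const, smul_zero]
    positivity
  rcases eq_or_lt_of_le hH0 with hHz | hHpos
  · have hhz : ∀ y, h y = 0 := by
      intro y
      have := Finset.sum_eq_zero_iff_of_nonneg (fun y _ => hh y) |>.1 hHz.symm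
      exact this y (Finset.mem_univ y)
    have : ∀ y, g y ^ α * h y ^ (1 - α) = 0 := by
      intro y; rw [hhz y, Real.zero_rpow (by linarith), mul_zero]
    rw [Finset.sum_congr rfl fun y _ => this y, Finset.sum_const, smul_zero]
    positivity
  have key : ∀ y, g y ^ α * h y ^ (1 - α)
      ≤ G ^ α * H ^ (1 - α) * (α * (g y / G) + (1 - α) * (h y / H)) := by
    intro y
    have hgm := Real.geom_mean_le_arith_mean2_weighted hα.le (by linarith : (0:ℝ) ≤ 1 - α)
      (div_nonneg (hg y) hG0) (div_nonneg (hh y) hH0) (by ring)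
    have heq : g y ^ α * h y ^ (1 - α)
        = G ^ α * H ^ (1 - α) * ((g y / G) ^ α * (h y / H) ^ (1 - α)) := by
      rw [Real.div_rpow (hg y) hG0, Real.div_rpow (hh y) hH0]
      have h1 : G ^ α ≠ 0 := ne_of_gt (Real.rpow_pos_of_pos hGpos α)
      have h2 : H ^ (1 - α) ≠ 0 := ne_of_gt (Real.rpow_pos_of_pos hHpos _)
      field_simp
    rw [heq]
    have hpos : 0 ≤ G ^ α * H ^ (1 - α) := by positivity
    exact mul_le_mul_of_nonneg_left hgm hpos
  calc ∑ y, g y ^ α * h y ^ (1 - α)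
      ≤ ∑ y, G ^ α * H ^ (1 - α) * (α * (g y / G) + (1 - α) * (h y / H)) :=
        Finset.sum_le_sum fun y _ => key y
    _ = G ^ α * H ^ (1 - α) * (α * (G / G) + (1 - α) * (H / H)) := by
        rw [← Finset.mul_sum]
        congr 1
        rw [Finset.sum_add_distrib, ← Finset.mul_sum, ← Finset.mul_sum, ← Finset.sum_div,
          ← Finset.sum_div]
    _ = G ^ α * H ^ (1 - α) := by
        rw [div_self (ne_of_gt hGpos), div_self (ne_of_gt hHpos)]; ring

theorem exists_le_of_sum_le {P f : X → ℝ} {c : ℝ} (hP : IsPMF P)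
    (h : ∑ x, P x * f x ≤ c) : ∃ x, 0 < P x ∧ f x ≤ c := by
  by_contra hcon
  push_neg at hcon
  obtain ⟨x0, hx0⟩ : ∃ x, 0 < P x := by
    by_contra hall
    push_neg at hall
    have : ∑ x, P x = 0 := Finset.sum_eq_zero fun x _ => le_antisymm (hall x) (hP.1 x)
    rw [hP.2] at this; norm_num at this
  have hlt : c < ∑ x, P x * f x := by
    have h1 : ∑ x, P x * c < ∑ x, P x * f x := by
      apply Finset.sum_lt_sum
      · intro x _
        rcases eq_or_lt_of_le (hP.1 x) with hz | hpos
        · rw [← hz, zero_mul, zero_mul]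
        · exact mul_le_mul_of_nonneg_left (hcon x hpos).le (hP.1 x)
      · exact ⟨x0, Finset.mem_univ x0,
          (mul_lt_mul_iff_right₀ hx0).2 (hcon x0 hx0)⟩
    calc c = (∑ x, P x) * c := by rw [hP.2, one_mul]
      _ = ∑ x, P x * c := by rw [Finset.sum_mul]
      _ < ∑ x, P x * f x := h1
  linarith

theorem exists_ge_of_le_sum {P f : X → ℝ} {c : ℝ} (hP : IsPMF P)
    (h : c ≤ ∑ x, P x * f x) : ∃ x, 0 < P x ∧ c ≤ f x := by
  have h' : ∑ x, P x * (-f x) ≤ -c := by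
    have : ∑ x, P x * (-f x) = -∑ x, P x * f x := by
      rw [← Finset.sum_neg_distrib]; congr 1; funext x; ring
    rw [this]; linarith
  obtain ⟨x, hx, hfx⟩ := exists_le_of_sum_le hP h'
  exact ⟨x, hx, by linarith⟩


noncomputable def Tf (α : ℝ) (W : X → Y → ℝ) (P : X → ℝ) : ℝ :=
  ∑ y, (∑ x, P x * W x y ^ α) ^ α⁻¹

noncomputable def Sf (α : ℝ) (W : X → Y → ℝ) (x : X) (Q : Y → ℝ) : ℝ :=
  ∑ y, W x y ^ α * Q y ^ (1 - α)

theorem one_le_sum_rpow {α : ℝ} (hα : 0 < α) (hα1 : α ≤ 1) {v : Y → ℝ} (hv : IsPMF v) :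
    1 ≤ ∑ y, v y ^ α := by
  rw [← hv.2]
  apply Finset.sum_le_sum
  intro y _
  rcases eq_or_lt_of_le (hv.1 y) with hz | hpos
  · rw [← hz, Real.zero_rpow hα.ne']
  · have h1 : v y ≤ 1 := by
      rw [← hv.2]
      exact Finset.single_le_sum (fun y _ => hv.1 y) (Finset.mem_univ y)
    calc v y = v y ^ (1:ℝ) := (Real.rpow_one _).symm
      _ ≤ v y ^ α := Real.rpow_le_rpow_of_exponent_ge hpos h1 hα1

theorem Sf_le_one {α : ℝ} (hα : 0 < α) (hα1 : α < 1) {W : X → Y → ℝ} (x : X)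
    (hWx : IsPMF (W x)) {Q : Y → ℝ} (hQ : IsPMF Q) : Sf α W x Q ≤ 1 := by
  have := sum_gm_le hα hα1 (W x) Q (hWx.1) (hQ.1)
  rw [hWx.2, hQ.2, Real.one_rpow, Real.one_rpow, mul_one] at this
  exact this

theorem avg_Sf_le {α : ℝ} (hα : 0 < α) (hα1 : α < 1) {W : X → Y → ℝ}
    (hW : ∀ x, IsPMF (W x)) {P : X → ℝ} (hP : IsPMF P) {Q : Y → ℝ} (hQ : IsPMF Q) :
    ∑ x, P x * Sf α W x Q ≤ Tf α W P ^ α := by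
  have hB : ∀ y, 0 ≤ ∑ x, P x * W x y ^ α := fun y =>
    Finset.sum_nonneg fun x _ => mul_nonneg (hP.1 x) (Real.rpow_nonneg ((hW x).1 y) α)
  have step1 : ∑ x, P x * Sf α W x Q
      = ∑ y, ((∑ x, P x * W x y ^ α) ^ (α⁻¹ : ℝ)) ^ α * Q y ^ (1 - α) := by
    unfold Sf
    simp_rw [Finset.mul_sum]
    rw [Finset.sum_comm]
    apply Finset.sum_congr rfl
    intro y _
    rw [Real.rpow_inv_rpow (hB y) hα.ne', Finset.sum_mul]
    apply Finset.sum_congr rfl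
    intro x _
    ring
  rw [step1]
  have := sum_gm_le hα hα1 (fun y => (∑ x, P x * W x y ^ α) ^ (α⁻¹ : ℝ)) Q
    (fun y => Real.rpow_nonneg (hB y) _) hQ.1
  rw [hQ.2, Real.one_rpow, mul_one] at this
  exact this


theorem key_ineq {α : ℝ} (hα : 0 < α) (hα1 : α < 1) {W : X → Y → ℝ}
    (hW : ∀ x, IsPMF (W x)) {P : X → ℝ} (hP : IsPMF P)
    (hmin : ∀ P', IsPMF P' → Tf α W P ≤ Tf α W P') (x : X) :
    Tf α W P ≤ ∑ y, (∑ x', P x' * W x' y ^ α) ^ (α⁻¹ - 1) * W x y ^ α := by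
  classical
  set p : ℝ := α⁻¹ with hpdef
  have hp1 : 1 ≤ p := by
    rw [hpdef]
    exact (one_le_inv₀ hα).2 hα1.le
  set B : Y → ℝ := fun y => ∑ x', P x' * W x' y ^ α with hBdef
  have hB : ∀ y, 0 ≤ B y := fun y =>
    Finset.sum_nonneg fun x' _ => mul_nonneg (hP.1 x') (Real.rpow_nonneg ((hW x').1 y) α)
  set d : Y → ℝ := fun y => W x y ^ α - B y with hddef
  set φ : ℝ → ℝ := fun t => ∑ y, (B y + t * d y) ^ p with hφdef
  -- the perturbed pmf
  set Pt : ℝ → X → ℝ := fun t x' => (1 - t) * P x' + t * (if x' = x then 1 else 0) with hPtdef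
  have hφT : ∀ t ∈ Set.Icc (0:ℝ) 1, φ t = Tf α W (Pt t) := by
    intro t ht
    unfold Tf
    apply Finset.sum_congr rfl
    intro y _
    congr 1
    rw [hBdef, hddef]
    simp only [Pt]
    rw [Finset.sum_congr rfl (fun x' _ => add_mul ((1-t) * P x') _ (W x' y ^ α)),
      Finset.sum_add_distrib]
    simp only [mul_assoc, ← Finset.mul_sum]
    have : ∑ x', (if x' = x then (1:ℝ) else 0) * W x' y ^ α = W x y ^ α := by
      simp [Finset.sum_ite_eq']
    rw [this]
    ring
  have hPt : ∀ t ∈ Set.Icc (0:ℝ) 1, IsPMF (Pt t) := by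
    intro t ht
    constructor
    · intro x'
      have := ht.1; have := ht.2
      apply add_nonneg (mul_nonneg (by linarith) (hP.1 x'))
      apply mul_nonneg (by linarith)
      split <;> norm_num
    · simp only [Pt]
      rw [Finset.sum_add_distrib, ← Finset.mul_sum, ← Finset.mul_sum, hP.2]
      simp [Finset.sum_ite_eq']
  have hφ0 : φ 0 = Tf α W P := by
    simp only [hφdef, zero_mul, add_zero]
    rfl
  have hφmin : ∀ t ∈ Set.Icc (0:ℝ) 1, φ 0 ≤ φ t := by
    intro t ht
    rw [hφ0, hφT t ht]
    exact hmin _ (hPt t ht)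
  -- derivative of φ at 0
  have hderiv : HasDerivAt φ (∑ y, d y * p * B y ^ (p - 1)) 0 := by
    have : ∀ y ∈ Finset.univ (α := Y), HasDerivAt (fun t => (B y + t * d y) ^ p)
        (d y * p * B y ^ (p - 1)) 0 := by
      intro y _
      have h1 : HasDerivAt (fun t : ℝ => B y + t * d y) (d y) 0 :=
        (hasDerivAt_mul_const (d y)).const_add (B y)
      have h2 := h1.rpow_const (p := p) (Or.inr hp1)
      simpa using h2
    exact HasDerivAt.fun_sum this
  -- derivative nonneg
  have hD : 0 ≤ ∑ y, d y * p * B y ^ (p - 1) := by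
    have hslope : Tendsto (slope φ 0) (𝓝[>] 0) (𝓝 (∑ y, d y * p * B y ^ (p - 1))) := by
      have := hasDerivAt_iff_tendsto_slope.1 hderiv
      exact this.mono_left (nhdsWithin_mono 0 (fun t ht => ne_of_gt ht))
    apply ge_of_tendsto hslope
    filter_upwards [Ioc_mem_nhdsGT zero_lt_one] with t ht
    rw [slope_def_field]
    apply div_nonneg _ (by linarith [ht.1])
    have := hφmin t ⟨ht.1.le, ht.2⟩
    linarith
  -- conclude
  have hBB : ∀ y, B y * B y ^ (p - 1) = B y ^ p := by
    intro y
    rcases eq_or_lt_of_le (hB y) with hz | hpos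
    · rw [← hz, Real.zero_rpow (by positivity : p ≠ 0), zero_mul]
    · rw [← Real.rpow_one_add' (by linarith) (by intro hc; simp at hc; linarith)]
      ring_nf
  have hTf : Tf α W P = ∑ y, B y ^ p := rfl
  have hexp : ∑ y, d y * p * B y ^ (p - 1)
      = p * (∑ y, B y ^ (p-1) * W x y ^ α - ∑ y, B y ^ p) := by
    rw [mul_sub, Finset.mul_sum, Finset.mul_sum, ← Finset.sum_sub_distrib]
    apply Finset.sum_congr rfl
    intro y _
    rw [← hBB y]
    simp only [hddef]
    ring
  have hp0 : 0 < p := lt_of_lt_of_le one_pos hp1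
  have h4 : 0 ≤ p * (∑ y, B y ^ (p-1) * W x y ^ α - ∑ y, B y ^ p) := hexp ▸ hD
  have h2 : ∑ y, B y ^ p ≤ ∑ y, B y ^ (p-1) * W x y ^ α := by
    by_contra hc
    push_neg at hc
    have : p * (∑ y, B y ^ (p-1) * W x y ^ α - ∑ y, B y ^ p) < 0 :=
      mul_neg_of_pos_of_neg hp0 (by linarith)
    linarith
  show Tf α W P ≤ ∑ y, B y ^ (p - 1) * W x y ^ α
  rw [hTf]
  exact h2


theorem Tf_continuous {α : ℝ} (hα : 0 < α) (W : X → Y → ℝ) : Continuous (Tf α W) := by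
  unfold Tf
  apply continuous_finset_sum
  intro y _
  exact (Real.continuous_rpow_const (by positivity)).comp
    (continuous_finset_sum _ fun x _ => (continuous_apply x).mul continuous_const)

theorem main_lt {α : ℝ} [Nonempty X] (hα : 0 < α) (hα1 : α < 1) (W : X → Y → ℝ)
    (hW : ∀ x, IsPMF (W x)) :
    (⨅ Q ∈ {Q : Y → ℝ | IsPMF Q}, ⨆ x, renyiDivE α (W x) Q)
      = ENNReal.ofReal (renyiCap α W) ∧
    ∃! q : Y → ℝ, IsPMF q ∧
      (⨆ x, renyiDivE α (W x) q) = ENNReal.ofReal (renyiCap α W) := by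
  classical
  have hαne : α ≠ 1 := hα1.ne
  have hβ : 0 < 1 - α := by linarith
  obtain ⟨x0⟩ := (inferInstance : Nonempty X)
  haveI : Nonempty Y := by
    rcases isEmpty_or_nonempty Y with hY | hY
    · exfalso
      have := (hW x0).2
      rw [Finset.univ_eq_empty, Finset.sum_empty] at this
      norm_num at this
    · exact hY
  -- delta pmf
  set P0 : X → ℝ := fun x' => if x' = x0 then 1 else 0 with hP0def
  have hP0 : IsPMF P0 := by
    constructor
    · intro x'; simp only [P0]; split <;> norm_num
    · simp [P0, Finset.sum_ite_eq']
  -- minimizer of Tf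
  obtain ⟨P, hPmem, hPmin'⟩ := (isCompact_stdSimplex ℝ X).exists_isMinOn
    ⟨P0, (isPMF_iff_mem_stdSimplex P0).1 hP0⟩ (Tf_continuous hα W).continuousOn
  have hP : IsPMF P := (isPMF_iff_mem_stdSimplex P).2 hPmem
  have hPmin : ∀ P', IsPMF P' → Tf α W P ≤ Tf α W P' := fun P' h =>
    hPmin' ((isPMF_iff_mem_stdSimplex P').1 h)
  set B : Y → ℝ := fun y => ∑ x', P x' * W x' y ^ α with hBdef
  have hB : ∀ y, 0 ≤ B y := fun y =>
    Finset.sum_nonneg fun x' _ => mul_nonneg (hP.1 x') (Real.rpow_nonneg ((hW x').1 y) α)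
  set Tv : ℝ := Tf α W P with hTvdef
  have hTfP0 : Tf α W P0 = 1 := by
    unfold Tf
    have h1 : ∀ y, (∑ x', P0 x' * W x' y ^ α) = W x0 y ^ α := by
      intro y; simp [P0, Finset.sum_ite_eq']
    rw [Finset.sum_congr rfl fun y _ => by rw [h1 y]]
    have h2 : ∀ y, (W x0 y ^ α) ^ (α⁻¹ : ℝ) = W x0 y := fun y =>
      Real.rpow_rpow_inv ((hW x0).1 y) hα.ne'
    rw [Finset.sum_congr rfl fun y _ => h2 y, (hW x0).2]
  have hTvle1 : Tv ≤ 1 := hTfP0 ▸ hPmin P0 hP0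
  have hTvpos : 0 < Tv := by
    have h1 : (1:ℝ) ≤ ∑ y, B y := by
      have : ∑ y, B y = ∑ x', P x' * ∑ y, W x' y ^ α := by
        rw [Finset.sum_comm (f := fun y x' => P x' * W x' y ^ α)]
        exact Finset.sum_congr rfl fun x' _ => (Finset.mul_sum _ _ _).symm
      rw [this, ← hP.2]
      apply Finset.sum_le_sum
      intro x' _
      calc P x' = P x' * 1 := (mul_one _).symm
        _ ≤ P x' * ∑ y, W x' y ^ α :=
          mul_le_mul_of_nonneg_left (one_le_sum_rpow hα hα1.le (hW x')) (hP.1 x')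
    obtain ⟨y1, hy1⟩ : ∃ y, 0 < B y := by
      by_contra hc
      push_neg at hc
      have : ∑ y, B y ≤ 0 := Finset.sum_nonpos fun y _ => hc y
      linarith
    calc (0:ℝ) < B y1 ^ (α⁻¹ : ℝ) := Real.rpow_pos_of_pos hy1 _
      _ ≤ Tv := Finset.single_le_sum (f := fun y => B y ^ (α⁻¹:ℝ))
          (fun y _ => Real.rpow_nonneg (hB y) _) (Finset.mem_univ y1)
  have hTvα : 0 < Tv ^ α := Real.rpow_pos_of_pos hTvpos α
  set Cv : ℝ := (α / (α - 1)) * Real.log Tv with hCvdef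
  have hCveq : Cv = (α - 1)⁻¹ * Real.log (Tv ^ α) := by
    rw [hCvdef, Real.log_rpow hTvpos]
    ring
  have hcoef : (α - 1)⁻¹ ≤ 0 := inv_nonpos.2 (by linarith)
  have hCap : renyiCap α W = Cv := by
    unfold renyiCap
    apply IsGreatest.csSup_eq
    constructor
    · exact ⟨P, hP, by rw [renyiInfo, if_neg hαne]; exact hCvdef⟩
    · rintro c ⟨P', hP', rfl⟩
      rw [renyiInfo, if_neg hαne]
      show (α / (α - 1)) * Real.log (Tf α W P') ≤ Cv
      rw [hCvdef]
      have hlog : Real.log Tv ≤ Real.log (Tf α W P') :=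
        Real.log_le_log hTvpos (hPmin P' hP')
      have hc2 : α / (α - 1) ≤ 0 := div_nonpos_of_nonneg_of_nonpos hα.le (by linarith)
      exact mul_le_mul_of_nonpos_left hlog hc2
  have hCv0 : 0 ≤ Cv := by
    rw [hCveq]
    have h1 : Real.log (Tv ^ α) ≤ 0 :=
      Real.log_nonpos (by positivity) (Real.rpow_le_one hTvpos.le hTvle1 hα.le)
    exact mul_nonneg_iff.2 (Or.inr ⟨hcoef, h1⟩)
  have hdivE : ∀ (x : X) (Q : Y → ℝ), renyiDivE α (W x) Q =
      if 0 < Sf α W x Q then ENNReal.ofReal ((α - 1)⁻¹ * Real.log (Sf α W x Q)) else ⊤ := by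
    intro x Q
    simp only [renyiDivE, renyiDiv, Sf, if_neg hαne]
    exact if_congr Iff.rfl rfl rfl
  -- the center
  set qc : Y → ℝ := fun y => B y ^ (α⁻¹ : ℝ) / Tv with hqcdef
  have hqc : IsPMF qc := by
    constructor
    · intro y; exact div_nonneg (Real.rpow_nonneg (hB y) _) hTvpos.le
    · rw [← Finset.sum_div]
      exact div_self (ne_of_gt hTvpos)
  have hSq : ∀ x, Tv ^ α ≤ Sf α W x qc := by
    intro x
    have hkey := key_ineq hα hα1 hW hP hPmin x
    have hstep : Sf α W x qc = (∑ y, B y ^ (α⁻¹ - 1) * W x y ^ α) / Tv ^ (1 - α) := by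
      unfold Sf
      rw [Finset.sum_div]
      apply Finset.sum_congr rfl
      intro y _
      rw [hqcdef]
      show W x y ^ α * (B y ^ (α⁻¹:ℝ) / Tv) ^ (1 - α) = B y ^ (α⁻¹ - 1) * W x y ^ α / Tv ^ (1-α)
      rw [Real.div_rpow (Real.rpow_nonneg (hB y) _) hTvpos.le,
        ← Real.rpow_mul (hB y)]
      have : α⁻¹ * (1 - α) = α⁻¹ - 1 := by
        field_simp
      rw [this]
      ring
    rw [hstep]
    have h2 : Tv ^ α = Tv / Tv ^ (1 - α) := by
      rw [eq_div_iff (ne_of_gt (Real.rpow_pos_of_pos hTvpos _)),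
        ← Real.rpow_add hTvpos]
      norm_num
    rw [h2]
    have hpow : 0 < Tv ^ (1 - α) := Real.rpow_pos_of_pos hTvpos _
    exact div_le_div_of_nonneg_right hkey hpow.le
  have hSQ_any : ∀ Q, IsPMF Q → ∃ x, Sf α W x Q ≤ Tv ^ α := by
    intro Q hQ
    obtain ⟨x, _, hx⟩ := exists_le_of_sum_le hP (avg_Sf_le hα hα1 hW hP hQ)
    exact ⟨x, hx⟩
  have hub : ∀ {Q : Y → ℝ}, IsPMF Q → ENNReal.ofReal Cv ≤ ⨆ x, renyiDivE α (W x) Q := by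
    intro Q hQ
    obtain ⟨x, hx⟩ := hSQ_any Q hQ
    refine le_trans ?_ (le_iSup _ x)
    rw [hdivE]
    split_ifs with h
    · apply ENNReal.ofReal_le_ofReal
      rw [hCveq]
      exact mul_le_mul_of_nonpos_left (Real.log_le_log h hx) hcoef
    · exact le_top
  have hq_opt_le : ∀ x, renyiDivE α (W x) qc ≤ ENNReal.ofReal Cv := by
    intro x
    rw [hdivE, if_pos (lt_of_lt_of_le hTvα (hSq x))]
    apply ENNReal.ofReal_le_ofReal
    rw [hCveq]
    exact mul_le_mul_of_nonpos_left (Real.log_le_log hTvα (hSq x)) hcoef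
  have hsup_qc : (⨆ x, renyiDivE α (W x) qc) = ENNReal.ofReal Cv :=
    le_antisymm (iSup_le hq_opt_le) (hub hqc)
  -- characterization of optimal centers
  have hopt_S : ∀ q : Y → ℝ, IsPMF q → (⨆ x, renyiDivE α (W x) q) = ENNReal.ofReal Cv →
      ∀ x, Tv ^ α ≤ Sf α W x q := by
    intro q hq hEq x
    have hle : renyiDivE α (W x) q ≤ ENNReal.ofReal Cv :=
      (le_iSup (fun x => renyiDivE α (W x) q) x).trans_eq hEq
    rw [hdivE] at hle
    by_cases h : 0 < Sf α W x q
    · rw [if_pos h] at hle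
      have hlog : (α - 1)⁻¹ * Real.log (Sf α W x q) ≤ Cv :=
        (ENNReal.ofReal_le_ofReal_iff hCv0).1 hle
      rw [hCveq] at hlog
      have hlog2 : Real.log (Tv ^ α) ≤ Real.log (Sf α W x q) := by
        by_contra hc
        push_neg at hc
        have := mul_lt_mul_of_neg_left hc ((inv_lt_zero.2 (by linarith : α - 1 < 0)))
        linarith
      exact (Real.log_le_log_iff hTvα h).1 hlog2
    · rw [if_neg h] at hle
      exact absurd hle (by simp)
  -- uniqueness of optimal centers
  have hunique : ∀ q1 q2 : Y → ℝ,
      IsPMF q1 → (⨆ x, renyiDivE α (W x) q1) = ENNReal.ofReal Cv →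
      IsPMF q2 → (⨆ x, renyiDivE α (W x) q2) = ENNReal.ofReal Cv → q1 = q2 := by
    intro q1 q2 hq1 hE1 hq2 hE2
    by_contra hne
    obtain ⟨y0, hy0⟩ := Function.ne_iff.1 hne
    have hS1 := hopt_S q1 hq1 hE1
    have hS2 := hopt_S q2 hq2 hE2
    have hβ1 : 1 - α < 1 := by linarith
    have hβne : (1 - α) ≠ 0 := ne_of_gt hβ
    set h : Y → ℝ := fun y => ((q1 y ^ (1-α) + q2 y ^ (1-α)) / 2) ^ ((1-α)⁻¹ : ℝ) with hhdef
    have hinner0 : ∀ y, (0:ℝ) ≤ (q1 y ^ (1-α) + q2 y ^ (1-α)) / 2 := by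
      intro y
      have := Real.rpow_nonneg (hq1.1 y) (1-α)
      have := Real.rpow_nonneg (hq2.1 y) (1-α)
      linarith
    have hh0 : ∀ y, 0 ≤ h y := fun y => Real.rpow_nonneg (hinner0 y) _
    have hinner : ∀ y, (q1 y ^ (1-α) + q2 y ^ (1-α)) / 2 ≤ ((q1 y + q2 y) / 2) ^ (1-α) := by
      intro y
      have hc := (Real.concaveOn_rpow hβ.le hβ1.le).2 (Set.mem_Ici.2 (hq1.1 y))
        (Set.mem_Ici.2 (hq2.1 y)) (by norm_num : (0:ℝ) ≤ 1/2) (by norm_num : (0:ℝ) ≤ 1/2)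
        (by norm_num)
      simp only [smul_eq_mul] at hc
      calc (q1 y ^ (1-α) + q2 y ^ (1-α)) / 2 = 1/2 * q1 y ^ (1-α) + 1/2 * q2 y ^ (1-α) := by ring
        _ ≤ (1/2 * q1 y + 1/2 * q2 y) ^ (1-α) := hc
        _ = ((q1 y + q2 y) / 2) ^ (1-α) := by ring_nf
    have hhle : ∀ y, h y ≤ (q1 y + q2 y) / 2 := by
      intro y
      rw [hhdef]
      have hmem : (0:ℝ) ≤ (q1 y + q2 y) / 2 := by
        have := hq1.1 y; have := hq2.1 y; linarith
      calc ((q1 y ^ (1-α) + q2 y ^ (1-α)) / 2) ^ ((1-α)⁻¹:ℝ)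
          ≤ (((q1 y + q2 y) / 2) ^ (1-α)) ^ ((1-α)⁻¹:ℝ) :=
            Real.rpow_le_rpow (hinner0 y) (hinner y) (inv_nonneg.2 hβ.le)
        _ = (q1 y + q2 y) / 2 := Real.rpow_rpow_inv hmem hβne
    have hhlt : h y0 < (q1 y0 + q2 y0) / 2 := by
      have hcs := (Real.strictConcaveOn_rpow hβ hβ1).2 (Set.mem_Ici.2 (hq1.1 y0))
        (Set.mem_Ici.2 (hq2.1 y0)) hy0 (by norm_num : (0:ℝ) < 1/2) (by norm_num : (0:ℝ) < 1/2)
        (by norm_num)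
      simp only [smul_eq_mul] at hcs
      have hstrict : (q1 y0 ^ (1-α) + q2 y0 ^ (1-α)) / 2 < ((q1 y0 + q2 y0) / 2) ^ (1-α) := by
        calc (q1 y0 ^ (1-α) + q2 y0 ^ (1-α)) / 2
            = 1/2 * q1 y0 ^ (1-α) + 1/2 * q2 y0 ^ (1-α) := by ring
          _ < (1/2 * q1 y0 + 1/2 * q2 y0) ^ (1-α) := hcs
          _ = ((q1 y0 + q2 y0) / 2) ^ (1-α) := by ring_nf
      have hmem : (0:ℝ) ≤ (q1 y0 + q2 y0) / 2 := by
        have := hq1.1 y0; have := hq2.1 y0; linarith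
      rw [hhdef]
      calc ((q1 y0 ^ (1-α) + q2 y0 ^ (1-α)) / 2) ^ ((1-α)⁻¹:ℝ)
          < (((q1 y0 + q2 y0) / 2) ^ (1-α)) ^ ((1-α)⁻¹:ℝ) :=
            Real.rpow_lt_rpow (hinner0 y0) hstrict (inv_pos.2 hβ)
        _ = (q1 y0 + q2 y0) / 2 := Real.rpow_rpow_inv hmem hβne
    set Z : ℝ := ∑ y, h y with hZdef
    have hZlt1 : Z < 1 := by
      have h3 : Z < ∑ y, (q1 y + q2 y) / 2 :=
        Finset.sum_lt_sum (fun y _ => hhle y) ⟨y0, Finset.mem_univ y0, hhlt⟩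
      have h2 : ∑ y, (q1 y + q2 y) / 2 = 1 := by
        rw [← Finset.sum_div, Finset.sum_add_distrib, hq1.2, hq2.2]
        norm_num
      linarith
    have hZ0 : 0 < Z := by
      obtain ⟨y1, hy1⟩ : ∃ y, 0 < q1 y := by
        by_contra hc
        push_neg at hc
        have h5 : ∑ y, q1 y ≤ 0 := Finset.sum_nonpos fun y _ => hc y
        rw [hq1.2] at h5; norm_num at h5
      have hhy1 : 0 < h y1 := by
        apply Real.rpow_pos_of_pos
        have h1 : 0 < q1 y1 ^ (1-α) := Real.rpow_pos_of_pos hy1 _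
        have h2 : 0 ≤ q2 y1 ^ (1-α) := Real.rpow_nonneg (hq2.1 y1) _
        linarith
      calc (0:ℝ) < h y1 := hhy1
        _ ≤ Z := Finset.single_le_sum (fun y _ => hh0 y) (Finset.mem_univ y1)
    set q3 : Y → ℝ := fun y => h y / Z with hq3def
    have hq3 : IsPMF q3 := by
      constructor
      · intro y; exact div_nonneg (hh0 y) hZ0.le
      · rw [← Finset.sum_div]
        exact div_self (ne_of_gt hZ0)
    have hS3 : ∀ x, Sf α W x q3 = ((Sf α W x q1 + Sf α W x q2) / 2) / Z ^ (1-α) := by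
      intro x
      have hterm : ∀ y, W x y ^ α * q3 y ^ (1 - α)
          = (W x y ^ α * q1 y ^ (1-α) + W x y ^ α * q2 y ^ (1-α)) / 2 / Z ^ (1-α) := by
        intro y
        have hq3y : q3 y = h y / Z := rfl
        rw [hq3y, Real.div_rpow (hh0 y) hZ0.le]
        have hhy : h y ^ (1 - α) = (q1 y ^ (1-α) + q2 y ^ (1-α)) / 2 := by
          rw [hhdef]
          exact Real.rpow_inv_rpow (hinner0 y) hβne
        rw [hhy]
        ring
      unfold Sf
      rw [Finset.sum_congr rfl fun y _ => hterm y, ← Finset.sum_div, ← Finset.sum_div,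
        Finset.sum_add_distrib]
    have hS3gt : ∀ x, Tv ^ α < Sf α W x q3 := by
      intro x
      rw [hS3 x]
      have hZβ : Z ^ (1-α) < 1 := by
        calc Z ^ (1-α) < 1 ^ (1-α) := Real.rpow_lt_rpow hZ0.le hZlt1 hβ
          _ = 1 := Real.one_rpow _
      have hZβ0 : 0 < Z ^ (1-α) := Real.rpow_pos_of_pos hZ0 _
      have havg : Tv ^ α ≤ (Sf α W x q1 + Sf α W x q2) / 2 := by
        have := hS1 x; have := hS2 x; linarith
      rw [lt_div_iff₀ hZβ0]
      calc Tv ^ α * Z ^ (1-α) < Tv ^ α * 1 := by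
            exact mul_lt_mul_of_pos_left hZβ hTvα
        _ = Tv ^ α := mul_one _
        _ ≤ (Sf α W x q1 + Sf α W x q2) / 2 := havg
    obtain ⟨x, hx⟩ := hSQ_any q3 hq3
    exact absurd hx (not_le.2 (hS3gt x))
  rw [hCap]
  constructor
  · apply le_antisymm
    · exact iInf₂_le_of_le qc hqc (le_of_eq hsup_qc)
    · exact le_iInf₂ fun Q hQ => hub hQ
  · exact ⟨qc, ⟨hqc, hsup_qc⟩, fun q hq => hunique q qc hq.1 hq.2 hqc hsup_qc⟩


noncomputable def Df (W Q : Y → ℝ) : ℝ := ∑ y, W y * Real.log (W y / Q y)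

noncomputable def If1 (W : X → Y → ℝ) (P : X → ℝ) : ℝ :=
  ∑ x, P x * (∑ y, W x y * Real.log (W x y))
    - ∑ y, (∑ x, P x * W x y) * Real.log (∑ x, P x * W x y)

theorem gibbs {V Q : Y → ℝ} (hV : IsPMF V) (hQ : IsPMF Q)
    (hac : ∀ y, Q y = 0 → V y = 0) : 0 ≤ Df V Q := by
  have hpt : ∀ y, V y - Q y ≤ V y * Real.log (V y / Q y) := by
    intro y
    rcases eq_or_lt_of_le (hV.1 y) with hz | hpos
    · rw [← hz, zero_mul]
      have := hQ.1 y
      linarith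
    · have hQpos : 0 < Q y := by
        rcases eq_or_lt_of_le (hQ.1 y) with hz2 | h
        · exact absurd (hac y hz2.symm) (ne_of_gt hpos)
        · exact h
      have hdiv : 0 < V y / Q y := div_pos hpos hQpos
      have hlog := Real.one_sub_inv_le_log_of_pos hdiv
      have hinv : (V y / Q y)⁻¹ = Q y / V y := by
        rw [inv_div]
      rw [hinv] at hlog
      have := mul_le_mul_of_nonneg_left hlog hpos.le
      calc V y - Q y = V y * (1 - Q y / V y) := by
            field_simp
        _ ≤ V y * Real.log (V y / Q y) := this
  calc (0:ℝ) = ∑ y, (V y - Q y) := by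
        rw [Finset.sum_sub_distrib, hV.2, hQ.2, sub_self]
    _ ≤ Df V Q := Finset.sum_le_sum fun y _ => hpt y

theorem renyiInfo_one_eq {W : X → Y → ℝ} (hW : ∀ x, IsPMF (W x)) {P : X → ℝ}
    (hP : IsPMF P) : renyiInfo 1 P W = If1 W P := by
  have hPW : ∀ x y, P x * W x y ≤ ∑ x', P x' * W x' y := by
    intro x y
    exact Finset.single_le_sum
      (f := fun x' => P x' * W x' y)
      (fun x' _ => mul_nonneg (hP.1 x') ((hW x').1 y)) (Finset.mem_univ x)
  have hpt : ∀ x y, P x * (W x y * Real.log (W x y / (∑ x', P x' * W x' y)))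
      = P x * (W x y * Real.log (W x y))
        - (P x * W x y) * Real.log (∑ x', P x' * W x' y) := by
    intro x y
    rcases eq_or_lt_of_le (hP.1 x) with hz | hPpos
    · rw [← hz]; ring
    rcases eq_or_lt_of_le ((hW x).1 y) with hz | hWpos
    · rw [← hz]
      simp
    have hPWpos : 0 < ∑ x', P x' * W x' y :=
      lt_of_lt_of_le (mul_pos hPpos hWpos) (hPW x y)
    rw [Real.log_div (ne_of_gt hWpos) (ne_of_gt hPWpos)]
    ring
  rw [renyiInfo, if_pos rfl]
  calc ∑ x, P x * ∑ y, W x y * Real.log (W x y / (∑ x', P x' * W x' y))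
      = ∑ x, ∑ y, P x * (W x y * Real.log (W x y / (∑ x', P x' * W x' y))) := by
        apply Finset.sum_congr rfl
        intro x _
        rw [Finset.mul_sum]
    _ = ∑ x, ∑ y, (P x * (W x y * Real.log (W x y))
          - (P x * W x y) * Real.log (∑ x', P x' * W x' y)) := by
        apply Finset.sum_congr rfl
        intro x _
        exact Finset.sum_congr rfl fun y _ => hpt x y
    _ = If1 W P := by
        unfold If1
        have h1 : ∀ x : X, ∑ y, (P x * (W x y * Real.log (W x y))
              - (P x * W x y) * Real.log (∑ x', P x' * W x' y))
            = P x * (∑ y, W x y * Real.log (W x y))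
              - ∑ y, (P x * W x y) * Real.log (∑ x', P x' * W x' y) := by
          intro x
          rw [Finset.sum_sub_distrib, Finset.mul_sum]
        rw [Finset.sum_congr rfl fun x _ => h1 x, Finset.sum_sub_distrib]
        congr 1
        rw [Finset.sum_comm]
        apply Finset.sum_congr rfl
        intro y _
        rw [Finset.sum_mul]

theorem golden {W : X → Y → ℝ} (hW : ∀ x, IsPMF (W x)) {P : X → ℝ} (hP : IsPMF P)
    {Q : Y → ℝ} (hac : ∀ y, Q y = 0 → (∑ x, P x * W x y) = 0) :
    ∑ x, P x * Df (W x) Q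
      = renyiInfo 1 P W + Df (fun y => ∑ x, P x * W x y) Q := by
  have hPW : ∀ x y, P x * W x y ≤ ∑ x', P x' * W x' y := by
    intro x y
    exact Finset.single_le_sum
      (f := fun x' => P x' * W x' y)
      (fun x' _ => mul_nonneg (hP.1 x') ((hW x').1 y)) (Finset.mem_univ x)
  have hpt : ∀ x y, P x * (W x y * Real.log (W x y / Q y))
      = P x * (W x y * Real.log (W x y / (∑ x', P x' * W x' y)))
        + (P x * W x y) * Real.log ((∑ x', P x' * W x' y) / Q y) := by
    intro x y
    rcases eq_or_lt_of_le (hP.1 x) with hz | hPpos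
    · rw [← hz]; ring
    rcases eq_or_lt_of_le ((hW x).1 y) with hz | hWpos
    · rw [← hz]; simp
    have hPWpos : 0 < ∑ x', P x' * W x' y :=
      lt_of_lt_of_le (mul_pos hPpos hWpos) (hPW x y)
    have hQne : Q y ≠ 0 := fun h => (ne_of_gt hPWpos) (hac y h)
    rw [Real.log_div (ne_of_gt hWpos) hQne,
      Real.log_div (ne_of_gt hWpos) (ne_of_gt hPWpos),
      Real.log_div (ne_of_gt hPWpos) hQne]
    ring
  rw [renyiInfo, if_pos rfl]
  unfold Df
  calc ∑ x, P x * ∑ y, W x y * Real.log (W x y / Q y)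
      = ∑ x, ∑ y, P x * (W x y * Real.log (W x y / Q y)) := by
        apply Finset.sum_congr rfl
        intro x _
        rw [Finset.mul_sum]
    _ = ∑ x, ∑ y, (P x * (W x y * Real.log (W x y / (∑ x', P x' * W x' y)))
          + (P x * W x y) * Real.log ((∑ x', P x' * W x' y) / Q y)) := by
        apply Finset.sum_congr rfl
        intro x _
        exact Finset.sum_congr rfl fun y _ => hpt x y
    _ = (∑ x, P x * ∑ y, W x y * Real.log (W x y / (∑ x', P x' * W x' y)))
          + ∑ y, (∑ x, P x * W x y) * Real.log ((∑ x', P x' * W x' y) / Q y) := by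
        rw [Finset.sum_congr rfl fun x _ => Finset.sum_add_distrib, Finset.sum_add_distrib]
        congr 1
        · apply Finset.sum_congr rfl
          intro x _
          rw [Finset.mul_sum]
        · rw [Finset.sum_comm]
          apply Finset.sum_congr rfl
          intro y _
          rw [Finset.sum_mul]


theorem main_one [Nonempty X] (W : X → Y → ℝ) (hW : ∀ x, IsPMF (W x)) :
    (⨅ Q ∈ {Q : Y → ℝ | IsPMF Q}, ⨆ x, renyiDivE 1 (W x) Q)
      = ENNReal.ofReal (renyiCap 1 W) ∧
    ∃! q : Y → ℝ, IsPMF q ∧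
      (⨆ x, renyiDivE 1 (W x) q) = ENNReal.ofReal (renyiCap 1 W) := by
  classical
  obtain ⟨x0⟩ := (inferInstance : Nonempty X)
  haveI : Nonempty Y := by
    rcases isEmpty_or_nonempty Y with hY | hY
    · exfalso
      have := (hW x0).2
      rw [Finset.univ_eq_empty, Finset.sum_empty] at this
      norm_num at this
    · exact hY
  set P0 : X → ℝ := fun x' => if x' = x0 then 1 else 0 with hP0def
  have hP0 : IsPMF P0 := by
    constructor
    · intro x'; simp only [P0]; split <;> norm_num
    · simp [P0, Finset.sum_ite_eq']
  -- continuity of If1 and existence of a maximizer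
  have hcont : Continuous (If1 W) := by
    unfold If1
    apply Continuous.sub
    · exact continuous_finset_sum _ fun x _ => (continuous_apply x).mul continuous_const
    · apply continuous_finset_sum
      intro y _
      exact Real.continuous_mul_log.comp
        (continuous_finset_sum _ fun x _ => (continuous_apply x).mul continuous_const)
  obtain ⟨P, hPmem, hPmax'⟩ := (isCompact_stdSimplex ℝ X).exists_isMaxOn
    ⟨P0, (isPMF_iff_mem_stdSimplex P0).1 hP0⟩ hcont.continuousOn
  have hP : IsPMF P := (isPMF_iff_mem_stdSimplex P).2 hPmem
  have hImax : ∀ P', IsPMF P' → renyiInfo 1 P' W ≤ renyiInfo 1 P W := by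
    intro P' h
    rw [renyiInfo_one_eq hW h, renyiInfo_one_eq hW hP]
    exact hPmax' ((isPMF_iff_mem_stdSimplex P').1 h)
  set Cv : ℝ := renyiInfo 1 P W with hCvdef
  have hCap : renyiCap 1 W = Cv := by
    unfold renyiCap
    apply IsGreatest.csSup_eq
    exact ⟨⟨P, hP, rfl⟩, by rintro c ⟨P', hP', rfl⟩; exact hImax P' hP'⟩
  have hI0 : renyiInfo 1 P0 W = 0 := by
    rw [renyiInfo, if_pos rfl]
    have h1 : ∀ y, (∑ x', P0 x' * W x' y) = W x0 y := by
      intro y; simp [P0, Finset.sum_ite_eq']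
    apply Finset.sum_eq_zero
    intro x _
    rcases eq_or_ne x x0 with rfl | hne
    · apply mul_eq_zero_of_right
      apply Finset.sum_eq_zero
      intro y _
      rw [h1 y]
      rcases eq_or_ne (W x y) 0 with hz | hnz
      · rw [hz]; ring
      · rw [div_self hnz, Real.log_one, mul_zero]
    · simp [P0, hne]
  have hCv0 : 0 ≤ Cv := hI0 ▸ hImax P0 hP0
  -- the candidate center
  set Qc : Y → ℝ := fun y => ∑ x', P x' * W x' y with hQcdef
  have hQc : IsPMF Qc := by
    constructor
    · intro y
      exact Finset.sum_nonneg fun x' _ => mul_nonneg (hP.1 x') ((hW x').1 y)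
    · rw [Finset.sum_comm (f := fun y x' => P x' * W x' y)]
      rw [Finset.sum_congr rfl fun x' _ => (Finset.mul_sum _ _ _).symm]
      rw [Finset.sum_congr rfl fun x' _ => by rw [(hW x').2]]
      simp [hP.2]
  have hdivE1 : ∀ (x : X) (Q : Y → ℝ), renyiDivE 1 (W x) Q =
      if (∀ y, Q y = 0 → W x y = 0) then ENNReal.ofReal (Df (W x) Q) else ⊤ := by
    intro x Q
    simp only [renyiDivE, renyiDiv, if_pos rfl, ite_true, if_true]
    rfl
  -- key optimality property of Qc
  have hkey : ∀ x, (∀ y, Qc y = 0 → W x y = 0) ∧ Df (W x) Qc ≤ Cv := by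
    intro x
    set Qt : ℝ → Y → ℝ := fun t y => (1 - t) * Qc y + t * W x y with hQtdef
    have hQtpmf : ∀ t, 0 ≤ t → t ≤ 1 → IsPMF (Qt t) := by
      intro t h0 h1
      constructor
      · intro y
        exact add_nonneg (mul_nonneg (by linarith) (hQc.1 y))
          (mul_nonneg h0 ((hW x).1 y))
      · show ∑ y, ((1 - t) * Qc y + t * W x y) = 1
        rw [Finset.sum_add_distrib, ← Finset.mul_sum, ← Finset.mul_sum, hQc.2, (hW x).2]
        ring
    have hdt : ∀ t, 0 < t → t < 1 → Df (W x) (Qt t) ≤ Cv := by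
      intro t ht0 ht1
      set Pt : X → ℝ := fun x' => (1 - t) * P x' + t * (if x' = x then 1 else 0) with hPtdef
      have hPt : IsPMF Pt := by
        constructor
        · intro x'
          apply add_nonneg (mul_nonneg (by linarith) (hP.1 x'))
          apply mul_nonneg ht0.le
          split <;> norm_num
        · show ∑ x', ((1 - t) * P x' + t * (if x' = x then 1 else 0)) = 1
          rw [Finset.sum_add_distrib, ← Finset.mul_sum, ← Finset.mul_sum, hP.2]
          simp [Finset.sum_ite_eq']
      have hPtW : ∀ y, (∑ x', Pt x' * W x' y) = Qt t y := by
        intro y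
        show ∑ x', ((1 - t) * P x' + t * (if x' = x then 1 else 0)) * W x' y = _
        rw [Finset.sum_congr rfl fun x' _ => add_mul ((1 - t) * P x') _ (W x' y),
          Finset.sum_add_distrib]
        simp only [mul_assoc, ← Finset.mul_sum]
        have h5 : ∑ x', (if x' = x then (1:ℝ) else 0) * W x' y = W x y := by
          simp [Finset.sum_ite_eq']
        rw [h5]
      have hg1 := golden hW hPt (Q := Qt t) (fun y hy => by rw [hPtW y]; exact hy)
      have hz : Df (fun y => ∑ x', Pt x' * W x' y) (Qt t) = 0 := by
        unfold Df
        apply Finset.sum_eq_zero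
        intro y _
        show (∑ x', Pt x' * W x' y) * Real.log ((∑ x', Pt x' * W x' y) / Qt t y) = 0
        rw [hPtW y]
        rcases eq_or_ne (Qt t y) 0 with hz2 | hnz
        · rw [hz2]; simp
        · rw [div_self hnz, Real.log_one, mul_zero]
      have hac2 : ∀ y, Qt t y = 0 → (∑ x', P x' * W x' y) = 0 := by
        intro y hy
        have hA : 0 ≤ (1 - t) * Qc y := mul_nonneg (by linarith) (hQc.1 y)
        have hB : 0 ≤ t * W x y := mul_nonneg ht0.le ((hW x).1 y)
        have hsum : (1 - t) * Qc y + t * W x y = 0 := hy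
        have hQcy : Qc y = 0 := by
          have h6 : (1 - t) * Qc y = 0 := by linarith
          rcases mul_eq_zero.1 h6 with h7 | h7
          · linarith
          · exact h7
        exact hQcy
      have hg2 := golden hW hP (Q := Qt t) hac2
      have hgb : 0 ≤ Df Qc (Qt t) :=
        gibbs hQc (hQtpmf t ht0.le ht1.le) (fun y hy => hac2 y hy)
      have hexp : ∑ x', Pt x' * Df (W x') (Qt t)
          = (1 - t) * ∑ x', P x' * Df (W x') (Qt t) + t * Df (W x) (Qt t) := by
        show ∑ x', ((1 - t) * P x' + t * (if x' = x then 1 else 0)) * Df (W x') (Qt t) = _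
        rw [Finset.sum_congr rfl fun x' _ => add_mul ((1 - t) * P x') _ _,
          Finset.sum_add_distrib]
        congr 1
        · rw [Finset.mul_sum]
          apply Finset.sum_congr rfl
          intro x' _
          ring
        · have h6 : ∀ x', (t * if x' = x then (1:ℝ) else 0) * Df (W x') (Qt t)
              = if x' = x then t * Df (W x') (Qt t) else 0 := by
            intro x'; split <;> ring
          rw [Finset.sum_congr rfl fun x' _ => h6 x', Finset.sum_ite_eq']
          simp
      have hS : Cv ≤ ∑ x', P x' * Df (W x') (Qt t) := by
        rw [hg2]
        have h7 : Df (fun y => ∑ x', P x' * W x' y) (Qt t) = Df Qc (Qt t) := rfl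
        rw [h7]
        linarith
      have hup : ∑ x', Pt x' * Df (W x') (Qt t) ≤ Cv := by
        rw [hg1, hz, add_zero]
        exact hImax Pt hPt
      have h9 : t * Df (W x) (Qt t) ≤ t * Cv := by nlinarith
      exact le_of_mul_le_mul_left h9 ht0
    have hac : ∀ y, Qc y = 0 → W x y = 0 := by
      by_contra hbad
      push_neg at hbad
      obtain ⟨y0, hQc0, hW0⟩ := hbad
      have hW0pos : 0 < W x y0 := lt_of_le_of_ne ((hW x).1 y0) (Ne.symm hW0)
      set K : ℝ := ∑ y ∈ Finset.univ.erase y0, W x y * Real.log (W x y) with hKdef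
      set t : ℝ := min (1/2) (Real.exp ((K - Cv - 1) / W x y0)) with htdef
      have ht0 : 0 < t := lt_min (by norm_num) (Real.exp_pos _)
      have ht1 : t < 1 := lt_of_le_of_lt (min_le_left _ _) (by norm_num)
      have hlogt : Real.log t ≤ (K - Cv - 1) / W x y0 := by
        calc Real.log t ≤ Real.log (Real.exp ((K - Cv - 1) / W x y0)) :=
            Real.log_le_log ht0 (min_le_right _ _)
          _ = _ := Real.log_exp _
      have hQtle1 : ∀ y, Qt t y ≤ 1 := by
        intro y
        have hpmf := hQtpmf t ht0.le ht1.le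
        rw [← hpmf.2]
        exact Finset.single_le_sum (fun y' _ => hpmf.1 y') (Finset.mem_univ y)
      have hterm : ∀ y, W x y * Real.log (W x y)
          ≤ W x y * Real.log (W x y / Qt t y) := by
        intro y
        rcases eq_or_lt_of_le ((hW x).1 y) with hz | hpos
        · rw [← hz]; simp
        · have hQtpos : 0 < Qt t y := by
            have h7 : 0 ≤ (1 - t) * Qc y := mul_nonneg (by linarith) (hQc.1 y)
            have h8 : 0 < t * W x y := mul_pos ht0 hpos
            show 0 < (1 - t) * Qc y + t * W x y
            linarith
          apply mul_le_mul_of_nonneg_left _ hpos.le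
          apply Real.log_le_log hpos
          rw [le_div_iff₀ hQtpos]
          nlinarith [hQtle1 y]
      have hy0term : W x y0 * Real.log (W x y0 / Qt t y0)
          = - (W x y0 * Real.log t) := by
        have h7 : Qt t y0 = t * W x y0 := by
          show (1 - t) * Qc y0 + t * W x y0 = t * W x y0
          rw [hQc0]; ring
        rw [h7]
        have h8 : W x y0 / (t * W x y0) = t⁻¹ := by
          rw [mul_comm]
          rw [div_mul_eq_div_div, div_self (ne_of_gt hW0pos), one_div]
        rw [h8, Real.log_inv]
        ring
      have hsplit : Df (W x) (Qt t)
          = W x y0 * Real.log (W x y0 / Qt t y0)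
            + ∑ y ∈ Finset.univ.erase y0, W x y * Real.log (W x y / Qt t y) :=
        (Finset.add_sum_erase Finset.univ _ (Finset.mem_univ y0)).symm
      have hKb : K ≤ ∑ y ∈ Finset.univ.erase y0, W x y * Real.log (W x y / Qt t y) :=
        Finset.sum_le_sum fun y _ => hterm y
      have hcontr := hdt t ht0 ht1
      rw [hsplit, hy0term] at hcontr
      have h10 : W x y0 * Real.log t ≤ K - Cv - 1 := by
        have h11 := mul_le_mul_of_nonneg_left hlogt hW0pos.le
        rwa [mul_div_cancel₀ _ (ne_of_gt hW0pos)] at h11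
      linarith
    refine ⟨hac, ?_⟩
    -- continuity of t ↦ Df (W x) (Qt t) at 0
    have hconts : ContinuousAt (fun t => Df (W x) (Qt t)) 0 := by
      unfold Df
      apply tendsto_finset_sum
      intro y _
      rcases eq_or_lt_of_le ((hW x).1 y) with hz | hpos
      · have h7 : ∀ t, W x y * Real.log (W x y / Qt t y) = 0 := by
          intro t
          rw [← hz, zero_mul]
        simp only [h7]
        exact tendsto_const_nhds
      · have hQcy : 0 < Qc y := by
          rcases eq_or_lt_of_le (hQc.1 y) with hz2 | h
          · exact absurd (hac y hz2.symm) (ne_of_gt hpos)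
          · exact h
        have hD : ContinuousAt (fun t => Qt t y) 0 := by
          show ContinuousAt (fun t : ℝ => (1 - t) * Qc y + t * W x y) 0
          fun_prop
        have hDval : Qt 0 y = Qc y := by
          show (1 - 0) * Qc y + 0 * W x y = Qc y
          ring
        have hdiv : ContinuousAt (fun t => W x y / Qt t y) 0 :=
          (continuousAt_const.div hD (by rw [hDval]; exact ne_of_gt hQcy))
        have hlogc : ContinuousAt (fun t => Real.log (W x y / Qt t y)) 0 := by
          apply ContinuousAt.log hdiv
          show W x y / Qt 0 y ≠ 0
          rw [hDval]
          exact ne_of_gt (div_pos hpos hQcy)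
        exact continuousAt_const.mul hlogc
    have hQt0 : Qt 0 = Qc := by
      funext y
      show (1 - 0) * Qc y + 0 * W x y = Qc y
      ring
    have htends : Tendsto (fun t => Df (W x) (Qt t)) (nhdsWithin 0 (Set.Ioi 0))
        (nhds (Df (W x) Qc)) := by
      rw [← hQt0]
      exact hconts.continuousWithinAt.tendsto
    apply le_of_tendsto htends
    filter_upwards [Ioo_mem_nhdsGT zero_lt_one] with t ht
    exact hdt t ht.1 ht.2
  -- lower bound lemma
  have hlb : ∀ Q : Y → ℝ, IsPMF Q → (∀ x y, Q y = 0 → W x y = 0) →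
      ∃ x, Cv ≤ Df (W x) Q := by
    intro Q hQ hQac
    have hac' : ∀ y, Q y = 0 → Qc y = 0 := by
      intro y hy
      apply Finset.sum_eq_zero
      intro x' _
      rw [hQac x' y hy, mul_zero]
    have hg := golden hW hP (Q := Q) hac'
    have hgb := gibbs hQc hQ hac'
    have h2 : Cv ≤ ∑ x, P x * Df (W x) Q := by
      rw [hg]
      have : Df (fun y => ∑ x, P x * W x y) Q = Df Qc Q := rfl
      rw [this]
      linarith
    obtain ⟨x, _, hx⟩ := exists_ge_of_le_sum hP h2
    exact ⟨x, hx⟩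
  have hub : ∀ {Q : Y → ℝ}, IsPMF Q → ENNReal.ofReal Cv ≤ ⨆ x, renyiDivE 1 (W x) Q := by
    intro Q hQ
    by_cases hQac : ∀ x y, Q y = 0 → W x y = 0
    · obtain ⟨x, hx⟩ := hlb Q hQ hQac
      refine le_trans ?_ (le_iSup _ x)
      rw [hdivE1, if_pos (fun y => hQac x y)]
      exact ENNReal.ofReal_le_ofReal hx
    · push_neg at hQac
      obtain ⟨x, y, hy, hne⟩ := hQac
      refine le_trans le_top (le_trans ?_ (le_iSup _ x))
      rw [hdivE1, if_neg]
      push_neg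
      exact ⟨y, hy, hne⟩
  have hsup_qc : (⨆ x, renyiDivE 1 (W x) Qc) = ENNReal.ofReal Cv := by
    apply le_antisymm
    · apply iSup_le
      intro x
      rw [hdivE1, if_pos (hkey x).1]
      exact ENNReal.ofReal_le_ofReal (hkey x).2
    · exact hub hQc
  -- characterization of optimal centers
  have hopt : ∀ q : Y → ℝ, IsPMF q → (⨆ x, renyiDivE 1 (W x) q) = ENNReal.ofReal Cv →
      ∀ x, (∀ y, q y = 0 → W x y = 0) ∧ Df (W x) q ≤ Cv := by
    intro q hq hEq x
    have hle : renyiDivE 1 (W x) q ≤ ENNReal.ofReal Cv :=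
      (le_iSup (fun x => renyiDivE 1 (W x) q) x).trans_eq hEq
    rw [hdivE1] at hle
    by_cases h : ∀ y, q y = 0 → W x y = 0
    · rw [if_pos h] at hle
      exact ⟨h, (ENNReal.ofReal_le_ofReal_iff hCv0).1 hle⟩
    · rw [if_neg h] at hle
      exact absurd hle (by simp)
  -- uniqueness
  have hunique : ∀ q1 q2 : Y → ℝ,
      IsPMF q1 → (⨆ x, renyiDivE 1 (W x) q1) = ENNReal.ofReal Cv →
      IsPMF q2 → (⨆ x, renyiDivE 1 (W x) q2) = ENNReal.ofReal Cv → q1 = q2 := by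
    intro q1 q2 hq1 hE1 hq2 hE2
    by_contra hne
    obtain ⟨y0, hy0⟩ := Function.ne_iff.1 hne
    have h1 := hopt q1 hq1 hE1
    have h2 := hopt q2 hq2 hE2
    set s : Y → ℝ := fun y => Real.sqrt (q1 y * q2 y) with hsdef
    have hs0 : ∀ y, 0 ≤ s y := fun y => Real.sqrt_nonneg _
    have hsle : ∀ y, s y ≤ (q1 y + q2 y) / 2 := by
      intro y
      rw [hsdef]
      show Real.sqrt (q1 y * q2 y) ≤ _
      rw [Real.sqrt_mul (hq1.1 y)]
      nlinarith [Real.sq_sqrt (hq1.1 y), Real.sq_sqrt (hq2.1 y),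
        sq_nonneg (Real.sqrt (q1 y) - Real.sqrt (q2 y)), Real.sqrt_nonneg (q1 y),
        Real.sqrt_nonneg (q2 y)]
    have hslt : s y0 < (q1 y0 + q2 y0) / 2 := by
      rw [hsdef]
      show Real.sqrt (q1 y0 * q2 y0) < _
      rw [Real.sqrt_mul (hq1.1 y0)]
      have hsne : Real.sqrt (q1 y0) ≠ Real.sqrt (q2 y0) := by
        intro hc
        exact hy0 ((Real.sqrt_inj (hq1.1 y0) (hq2.1 y0)).1 hc)
      have hsq : 0 < (Real.sqrt (q1 y0) - Real.sqrt (q2 y0)) ^ 2 :=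
        sq_pos_iff.2 (sub_ne_zero.2 hsne)
      nlinarith [Real.sq_sqrt (hq1.1 y0), Real.sq_sqrt (hq2.1 y0), hsq,
        Real.sqrt_nonneg (q1 y0), Real.sqrt_nonneg (q2 y0)]
    set Z : ℝ := ∑ y, s y with hZdef
    have hZlt1 : Z < 1 := by
      have h3 : Z < ∑ y, (q1 y + q2 y) / 2 :=
        Finset.sum_lt_sum (fun y _ => hsle y) ⟨y0, Finset.mem_univ y0, hslt⟩
      have h4 : ∑ y, (q1 y + q2 y) / 2 = 1 := by
        rw [← Finset.sum_div, Finset.sum_add_distrib, hq1.2, hq2.2]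
        norm_num
      linarith
    have hZ0 : 0 < Z := by
      obtain ⟨y1, hy1⟩ : ∃ y, 0 < W x0 y := by
        by_contra hc
        push_neg at hc
        have h5 : ∑ y, W x0 y ≤ 0 := Finset.sum_nonpos fun y _ => hc y
        rw [(hW x0).2] at h5; norm_num at h5
      have hq1y : 0 < q1 y1 := by
        rcases eq_or_lt_of_le (hq1.1 y1) with hz | h
        · exact absurd ((h1 x0).1 y1 hz.symm) (ne_of_gt hy1)
        · exact h
      have hq2y : 0 < q2 y1 := by
        rcases eq_or_lt_of_le (hq2.1 y1) with hz | h
        · exact absurd ((h2 x0).1 y1 hz.symm) (ne_of_gt hy1)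
        · exact h
      have : 0 < s y1 := Real.sqrt_pos.2 (mul_pos hq1y hq2y)
      calc (0:ℝ) < s y1 := this
        _ ≤ Z := Finset.single_le_sum (fun y _ => hs0 y) (Finset.mem_univ y1)
    set q3 : Y → ℝ := fun y => s y / Z with hq3def
    have hq3 : IsPMF q3 := by
      constructor
      · intro y; exact div_nonneg (hs0 y) hZ0.le
      · rw [← Finset.sum_div]
        exact div_self (ne_of_gt hZ0)
    have hq3ac : ∀ x y, q3 y = 0 → W x y = 0 := by
      intro x y hy
      have hsy : s y = 0 := by
        have : s y / Z = 0 := hy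
        field_simp at this
        simpa using this
      have : q1 y * q2 y = 0 := by
        have := Real.sqrt_eq_zero (mul_nonneg (hq1.1 y) (hq2.1 y)) |>.1 hsy
        exact this
      rcases mul_eq_zero.1 this with hz | hz
      · exact (h1 x).1 y hz
      · exact (h2 x).1 y hz
    have hd3 : ∀ x, Df (W x) q3 ≤ Cv + Real.log Z := by
      intro x
      have hpt : ∀ y, W x y * Real.log (W x y / q3 y)
          = (W x y * Real.log (W x y / q1 y) + W x y * Real.log (W x y / q2 y)) / 2
            + W x y * Real.log Z := by
        intro y
        rcases eq_or_lt_of_le ((hW x).1 y) with hz | hWpos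
        · rw [← hz]; ring
        have hq1y : 0 < q1 y := by
          rcases eq_or_lt_of_le (hq1.1 y) with hz2 | h
          · exact absurd ((h1 x).1 y hz2.symm) (ne_of_gt hWpos)
          · exact h
        have hq2y : 0 < q2 y := by
          rcases eq_or_lt_of_le (hq2.1 y) with hz2 | h
          · exact absurd ((h2 x).1 y hz2.symm) (ne_of_gt hWpos)
          · exact h
        have hsy : 0 < s y := Real.sqrt_pos.2 (mul_pos hq1y hq2y)
        have hq3y : q3 y = s y / Z := rfl
        rw [hq3y, div_div_eq_mul_div, Real.log_div (by positivity) (ne_of_gt hsy),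
          Real.log_mul (ne_of_gt hWpos) (ne_of_gt hZ0),
          Real.log_div (ne_of_gt hWpos) (ne_of_gt hq1y),
          Real.log_div (ne_of_gt hWpos) (ne_of_gt hq2y)]
        have hlogs : Real.log (s y) = (Real.log (q1 y) + Real.log (q2 y)) / 2 := by
          rw [hsdef]
          show Real.log (Real.sqrt (q1 y * q2 y)) = _
          rw [Real.log_sqrt (by positivity), Real.log_mul (ne_of_gt hq1y) (ne_of_gt hq2y)]
        rw [hlogs]
        ring
      have hsum : Df (W x) q3
          = (Df (W x) q1 + Df (W x) q2) / 2 + (∑ y, W x y) * Real.log Z := by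
        unfold Df
        rw [Finset.sum_congr rfl fun y _ => hpt y, Finset.sum_add_distrib, ← Finset.sum_div,
          ← Finset.sum_add_distrib, Finset.sum_mul]
      rw [hsum, (hW x).2, one_mul]
      have := (h1 x).2; have := (h2 x).2
      linarith
    have hlogZ : Real.log Z < 0 := Real.log_neg hZ0 hZlt1
    obtain ⟨x, hx⟩ := hlb q3 hq3 hq3ac
    have := hd3 x
    linarith
  rw [hCap]
  constructor
  · apply le_antisymm
    · exact iInf₂_le_of_le Qc hQc (le_of_eq hsup_qc)
    · exact le_iInf₂ fun Q hQ => hub hQ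
  · exact ⟨Qc, ⟨hQc, hsup_qc⟩, fun q hq => hunique q Qc hq.1 hq.2 hQc hsup_qc⟩

end RCap

/-- the Rényi capacity equals the Rényi radius, and there is a unique
Rényi center achieving the radius. -/
theorem renyiCap_eq_radius_and_center {X Y : Type*} [Fintype X] [Fintype Y] [Nonempty X]
    (α : ℝ) (hα : α ∈ Set.Ioc (0:ℝ) 1) (W : X → Y → ℝ) (hW : ∀ x, IsPMF (W x)) :
    (⨅ Q ∈ {Q : Y → ℝ | IsPMF Q}, ⨆ x, renyiDivE α (W x) Q)
      = ENNReal.ofReal (renyiCap α W) ∧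
    ∃! q : Y → ℝ, IsPMF q ∧
      (⨆ x, renyiDivE α (W x) q) = ENNReal.ofReal (renyiCap α W) := by
  rcases eq_or_lt_of_le hα.2 with heq | hlt
  · subst heq
    exact RCap.main_one W hW
  · exact RCap.main_lt hα.1 hlt W hW
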